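/- Finite-time blow-up in any prescribed interval of ℝ (Theorem 1.3, case d = 1). Let χ, μ > 0 and let I ⊂ ℝ be any nonempty open interval. Then there exist a finite time T* > 0 and smooth bounded initial data ρ₀, c₀ : ℝ → ℝ with ρ₀ ≥ β₁ > 0 and c₀ ≥ β₂ > 0 for some constants β₁, β₂, with every derivative of order k ≥ 1 of ρ₀ and c₀ square-integrable on ℝ, such that there is a classical solution (ρ, c) of the hyperbolic Keller–Segel system on ℝ × [0,T*) with this initial data satisfying sup_{0 ≤ t < T*} ( ‖ρ(·,t)‖_{L^∞(ℝ)} + ‖c(·,t)‖_{L^∞(ℝ)} + ‖∂ₓc(·,t)‖_{L^∞(ℝ)} + ‖∂ₓ log c(·,t)‖_{L^∞(ℝ)} ) < ∞, while ‖∂ₓρ(·,t)‖_{L^∞(I)} + ‖∂ₓₓc(·,t)‖_{L^∞(I)} tends to ∞ as t → T*. -/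

import Mathlib

open MeasureTheory Filter Topology ENNReal

/-- A classical solution of the one-dimensional hyperbolic Keller–Segel system of consumption
type `∂ₜρ = −χ ∂ₓ(ρ ∂ₓ log c)`, `∂ₜc = −μ c ρ` on `ℝ × J`:
`ρ(·,t)` is `C¹`, `c(·,t)` is `C²`, both are differentiable in `t` (encoded by the
`HasDerivWithinAt` statements, which also express the equations pointwise), and `c > 0`. -/
structure IsClassicalSolution1D (χ μ : ℝ) (ρ c : ℝ → ℝ → ℝ) (J : Set ℝ) : Prop where
  rho_space : ∀ t ∈ J, ContDiff ℝ 1 (fun x => ρ x t)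
  c_space : ∀ t ∈ J, ContDiff ℝ 2 (fun x => c x t)
  c_pos : ∀ (x : ℝ), ∀ t ∈ J, 0 < c x t
  rho_eq : ∀ (x : ℝ), ∀ t ∈ J,
    HasDerivWithinAt (fun s => ρ x s)
      (-χ * deriv (fun y => ρ y t * deriv (fun z => Real.log (c z t)) y) x) J t
  c_eq : ∀ (x : ℝ), ∀ t ∈ J,
    HasDerivWithinAt (fun s => c x s) (-μ * c x t * ρ x t) J t


namespace KSB

noncomputable section

/-! profile functions -/

def qf (p : ℝ) : ℝ := p^2/3 + 2/3 * Real.sqrt p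
def qd (p : ℝ) : ℝ := 2*p/3 + 1/(3*Real.sqrt p)
def wf (p : ℝ) : ℝ := 2/3 * (p - (Real.sqrt p)⁻¹)
def wd (p : ℝ) : ℝ := 2/3 + 1/(3*(Real.sqrt p)^3)
def Hf (p : ℝ) : ℝ := p^2/3 - 4/3 * Real.sqrt p

variable {p : ℝ}

lemma sqrt_pos' (h1 : 1 ≤ p) : 0 < Real.sqrt p := Real.sqrt_pos.2 (by linarith)

lemma one_le_sqrt (h1 : 1 ≤ p) : 1 ≤ Real.sqrt p := by
  rw [show (1:ℝ) = Real.sqrt 1 by simp]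
  exact Real.sqrt_le_sqrt h1

lemma sq_sqrt' (h1 : 1 ≤ p) : Real.sqrt p ^ 2 = p := Real.sq_sqrt (by linarith)

lemma hasDerivAt_qf (h1 : 1 ≤ p) : HasDerivAt qf (qd p) p := by
  have hs := sqrt_pos' h1
  have h := ((hasDerivAt_pow 2 p).div_const 3).add
    ((Real.hasDerivAt_sqrt (by linarith : p ≠ 0)).const_mul (2/3))
  refine h.congr_deriv ?_; symm
  rw [qd]
  field_simp [qd]
  ring

lemma hasDerivAt_wf (h1 : 1 ≤ p) : HasDerivAt wf (wd p) p := by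
  have hs := sqrt_pos' h1
  have h := (((hasDerivAt_id p).sub
    ((Real.hasDerivAt_sqrt (by linarith : p ≠ 0)).inv hs.ne')).const_mul (2/3 : ℝ))
  refine h.congr_deriv ?_; symm
  rw [wd]
  obtain ⟨s, hs0, hps⟩ : ∃ s, 0 < s ∧ Real.sqrt p = s := ⟨_, hs, rfl⟩
  have hp : p = s^2 := by rw [← hps]; exact (sq_sqrt' h1).symm
  simp only [hps, hp, Real.sqrt_sq hs0.le]
  field_simp
  ring

lemma hasDerivAt_Hf (h1 : 1 ≤ p) : HasDerivAt Hf (wf p) p := by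
  have hs := sqrt_pos' h1
  have h := ((hasDerivAt_pow 2 p).div_const 3).sub
    ((Real.hasDerivAt_sqrt (by linarith : p ≠ 0)).const_mul (4/3))
  refine h.congr_deriv ?_; symm
  rw [wf]
  obtain ⟨s, hs0, hps⟩ : ∃ s, 0 < s ∧ Real.sqrt p = s := ⟨_, hs, rfl⟩
  have hp : p = s^2 := by rw [← hps]; exact (sq_sqrt' h1).symm
  simp only [hps, hp, Real.sqrt_sq hs0.le]
  field_simp
  ring

lemma identity1 (h1 : 1 ≤ p) : qd p * p = qd p * wf p + qf p * wd p := by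
  have hs := sqrt_pos' h1
  have h2 : Real.sqrt p ^ 2 = p := sq_sqrt' h1
  rw [qd, qf, wf, wd]
  obtain ⟨s, hs0, hps⟩ : ∃ s, 0 < s ∧ Real.sqrt p = s := ⟨_, hs, rfl⟩
  have hp : p = s^2 := by rw [← hps]; exact (sq_sqrt' h1).symm
  simp only [hps, hp, Real.sqrt_sq hs0.le]
  field_simp
  ring

lemma identity2 (h1 : 1 ≤ p) : Hf p - p * wf p = -qf p := by
  have hs := sqrt_pos' h1
  have h2 : Real.sqrt p ^ 2 = p := sq_sqrt' h1
  rw [Hf, qf, wf]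
  obtain ⟨s, hs0, hps⟩ : ∃ s, 0 < s ∧ Real.sqrt p = s := ⟨_, hs, rfl⟩
  have hp : p = s^2 := by rw [← hps]; exact (sq_sqrt' h1).symm
  simp only [hps, hp, Real.sqrt_sq hs0.le]
  field_simp
  ring

lemma sqrt_le_two (h1 : 1 ≤ p) (h2 : p ≤ 2) : Real.sqrt p ≤ 2 := by
  nlinarith [sq_sqrt' h1, sqrt_pos' h1]

lemma qf_ge_one (h1 : 1 ≤ p) : 1 ≤ qf p := by
  have := one_le_sqrt h1
  rw [qf]; nlinarith

lemma qf_le (h1 : 1 ≤ p) (h2 : p ≤ 2) : qf p ≤ 8/3 := by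
  have := sqrt_le_two h1 h2
  rw [qf]; nlinarith

lemma wf_nonneg (h1 : 1 ≤ p) : 0 ≤ wf p := by
  have hs := one_le_sqrt h1
  have : (Real.sqrt p)⁻¹ ≤ 1 := by
    rw [inv_le_one_iff₀]; right; exact hs
  rw [wf]; nlinarith

lemma wf_le (h1 : 1 ≤ p) (h2 : p ≤ 2) : wf p ≤ 2 := by
  have hs := one_le_sqrt h1
  have h0 : (0:ℝ) < (Real.sqrt p)⁻¹ := by positivity
  rw [wf]; nlinarith

lemma abs_wf_le (h1 : 1 ≤ p) (h2 : p ≤ 2) : |wf p| ≤ 2 := by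
  rw [abs_le]; exact ⟨by linarith [wf_nonneg h1], wf_le h1 h2⟩

lemma abs_Hf_le (h1 : 1 ≤ p) (h2 : p ≤ 2) : |Hf p| ≤ 4 := by
  have hs := one_le_sqrt h1
  have := sqrt_le_two h1 h2
  rw [Hf, abs_le]; constructor <;> nlinarith

lemma qd_ge (h1 : 1 ≤ p) : 2/3 ≤ qd p := by
  have hs := sqrt_pos' h1
  have : 0 < 1/(3*Real.sqrt p) := by positivity
  rw [qd]; nlinarith

lemma qd_pos (h1 : 1 ≤ p) : 0 < qd p := lt_of_lt_of_le (by norm_num) (qd_ge h1)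

lemma contDiffAt_qf (h1 : 1 ≤ p) : ContDiffAt ℝ (⊤:ℕ∞) qf p := by
  have h : ContDiffAt ℝ (⊤:ℕ∞) (fun x : ℝ => Real.sqrt x) p :=
    Real.contDiffAt_sqrt (by linarith : p ≠ 0)
  exact ((contDiffAt_id.pow 2).div_const 3).add (contDiffAt_const.mul h)

lemma contDiffAt_wf (h1 : 1 ≤ p) : ContDiffAt ℝ (⊤:ℕ∞) wf p := by
  have h : ContDiffAt ℝ (⊤:ℕ∞) (fun x : ℝ => Real.sqrt x) p :=
    Real.contDiffAt_sqrt (by linarith : p ≠ 0)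
  exact contDiffAt_const.mul (contDiffAt_id.sub (h.inv (sqrt_pos' h1).ne'))

/-! ## Setup: a smooth bump and induced characteristics -/

structure Setup where
  φ : ℝ → ℝ
  a : ℝ
  b : ℝ
  hab : a < b
  smooth : ContDiff ℝ (⊤:ℕ∞) φ
  nonneg : ∀ y, 0 ≤ φ y
  le_one : ∀ y, φ y ≤ 1
  vanish : ∀ y, y ∉ Set.Ioo a b → φ y = 0
  ystar : ℝ
  hmstar : ∀ y, deriv φ ystar ≤ deriv φ y
  hmneg : deriv φ ystar < 0
  hyin : ystar ∈ Set.Icc a b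
  hTle : 1 ≤ (b - a) * (-(deriv φ ystar))

namespace Setup

variable (S : Setup)

def m : ℝ := deriv S.φ S.ystar
def T : ℝ := (-(S.m))⁻¹

lemma m_neg : S.m < 0 := S.hmneg
lemma T_pos : 0 < S.T := by
  have := S.m_neg; rw [T]; exact inv_pos.2 (by linarith)
lemma T_le : S.T ≤ S.b - S.a := by
  have hm := S.m_neg
  rw [T, inv_le_iff_one_le_mul₀ (by linarith)]
  exact S.hTle

def J : Set ℝ := Set.Ico 0 S.T

def p0 (y : ℝ) : ℝ := 1 + S.φ y

lemma p0_ge (y : ℝ) : 1 ≤ S.p0 y := by have := S.nonneg y; rw [p0]; linarith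
lemma p0_le (y : ℝ) : S.p0 y ≤ 2 := by have := S.le_one y; rw [p0]; linarith

lemma phi_diff : Differentiable ℝ S.φ := S.smooth.differentiable (by norm_num)
lemma phi_hasDeriv (y : ℝ) : HasDerivAt S.φ (deriv S.φ y) y :=
  (S.phi_diff y).hasDerivAt
lemma deriv_phi_cont : Continuous (deriv S.φ) := S.smooth.continuous_deriv (by norm_num)
lemma m_le (y : ℝ) : S.m ≤ deriv S.φ y := S.hmstar y

lemma one_add_pos {t : ℝ} (ht0 : 0 ≤ t) (htT : t < S.T) (y : ℝ) :
    0 < 1 + t * deriv S.φ y := by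
  have hm := S.m_neg
  have h1 : t * S.m ≤ t * deriv S.φ y := by
    apply mul_le_mul_of_nonneg_left (S.m_le y) ht0
  have h2 : t * (-S.m) < 1 := by
    rw [T] at htT
    calc t * (-S.m) < (-S.m)⁻¹ * (-S.m) := by
          apply mul_lt_mul_of_pos_right htT (by linarith)
      _ = 1 := inv_mul_cancel₀ (by linarith)
  nlinarith

def g (t y : ℝ) : ℝ := y + t * S.p0 y

lemma hasDerivAt_g (t y : ℝ) : HasDerivAt (fun y' => S.g t y') (1 + t * deriv S.φ y) y := by
  have h := (hasDerivAt_id y).add (((S.phi_hasDeriv y).const_add 1).const_mul t)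
  exact h

lemma g_strictMono {t : ℝ} (ht0 : 0 ≤ t) (htT : t < S.T) : StrictMono (S.g t) := by
  apply strictMono_of_deriv_pos
  intro y
  rw [(S.hasDerivAt_g t y).deriv]
  exact S.one_add_pos ht0 htT y

lemma g_surj {t : ℝ} (ht0 : 0 ≤ t) (htT : t < S.T) : Function.Surjective (S.g t) := by
  intro x
  have hcont : Continuous (S.g t) := by
    have : Differentiable ℝ (S.g t) := fun y => ((S.hasDerivAt_g t y)).differentiableAt
    exact this.continuous
  have h1 : S.g t (x - 1 - 2*S.T) ≤ x := by
    have := S.p0_le (x - 1 - 2*S.T)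
    have hp1 := S.p0_ge (x - 1 - 2*S.T)
    have : t * S.p0 (x - 1 - 2*S.T) ≤ 2*S.T := by nlinarith [S.T_pos]
    rw [g]; linarith
  have h2 : x ≤ S.g t x := by
    have := S.p0_ge x
    rw [g]; nlinarith
  have hle : x - 1 - 2*S.T ≤ x := by have := S.T_pos; linarith
  have := intermediate_value_Icc hle hcont.continuousOn
  obtain ⟨y, _, hy⟩ := this ⟨h1, h2⟩
  exact ⟨y, hy⟩

def Y (x t : ℝ) : ℝ := Function.invFun (S.g t) x

lemma g_Y {t : ℝ} (ht0 : 0 ≤ t) (htT : t < S.T) (x : ℝ) : S.g t (S.Y x t) = x :=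
  Function.invFun_eq (S.g_surj ht0 htT x)

lemma Y_g {t : ℝ} (ht0 : 0 ≤ t) (htT : t < S.T) (y : ℝ) : S.Y (S.g t y) t = y :=
  (S.g_strictMono ht0 htT).injective (S.g_Y ht0 htT (S.g t y))

lemma Y_zero (x : ℝ) : S.Y x 0 = x := by
  have h := S.g_Y le_rfl S.T_pos x
  rw [g] at h
  simpa using h

lemma Y_cont {t : ℝ} (ht0 : 0 ≤ t) (htT : t < S.T) : Continuous (fun x => S.Y x t) := by
  let e := StrictMono.orderIsoOfSurjective (S.g t) (S.g_strictMono ht0 htT) (S.g_surj ht0 htT)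
  have he : (fun x => S.Y x t) = (e.symm : ℝ → ℝ) := by
    funext x
    apply (S.g_strictMono ht0 htT).injective
    rw [S.g_Y ht0 htT x]
    exact (StrictMono.orderIsoOfSurjective_self_symm_apply _ _ _ x).symm
  rw [he]
  exact OrderIso.continuous e.symm

lemma Y_hasDerivAt {t : ℝ} (ht0 : 0 ≤ t) (htT : t < S.T) (x : ℝ) :
    HasDerivAt (fun x' => S.Y x' t) (1 + t * deriv S.φ (S.Y x t))⁻¹ x := by
  apply HasDerivAt.of_local_left_inverse ((S.Y_cont ht0 htT).continuousAt)
    (S.hasDerivAt_g t (S.Y x t)) (S.one_add_pos ht0 htT _).ne'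
  filter_upwards with y
  exact S.g_Y ht0 htT y

lemma Y_time {t : ℝ} (ht0 : 0 ≤ t) (htT : t < S.T) (x : ℝ) :
    HasDerivWithinAt (fun s => S.Y x s)
      (-(S.p0 (S.Y x t)) * (1 + t * deriv S.φ (S.Y x t))⁻¹) S.J t := by
  set u : ℝ → ℝ := fun s => S.Y x s with hu
  set τ : ℝ := (t + S.T)/2 with hτdef
  have hτ : t < τ := by rw [hτdef]; linarith
  have hτT : τ < S.T := by rw [hτdef]; linarith
  have hτ0 : 0 ≤ τ := by linarith
  set κ : ℝ := 1 + τ * S.m with hκdef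
  have hκ : 0 < κ := S.one_add_pos hτ0 hτT S.ystar
  -- key identity
  have key : ∀ s, 0 ≤ s → s < S.T →
      (u s - u t) + s * (S.φ (u s) - S.φ (u t)) = (t - s) * S.p0 (u t) := by
    intro s hs0 hsT
    have h1 : S.g s (u s) = x := S.g_Y hs0 hsT x
    have h2 : S.g t (u t) = x := S.g_Y ht0 htT x
    rw [g] at h1 h2
    rw [p0] at h1 h2 ⊢
    linear_combination h1 - h2
  -- mean value point
  have hex : ∀ s, ∃ ξ, (S.φ (u s) - S.φ (u t) = deriv S.φ ξ * (u s - u t)) ∧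
      |ξ - u t| ≤ |u s - u t| := by
    intro s
    rcases lt_trichotomy (u s) (u t) with h | h | h
    · obtain ⟨ξ, hξ1, hξ2⟩ := exists_hasDerivAt_eq_slope S.φ (deriv S.φ) h
        S.phi_diff.continuous.continuousOn (fun y _ => S.phi_hasDeriv y)
      have hne : u t - u s ≠ 0 := by linarith
      rw [eq_div_iff hne] at hξ2
      refine ⟨ξ, by linear_combination hξ2, ?_⟩
      have habs : |u s - u t| = u t - u s := by rw [abs_of_neg (by linarith : u s - u t < 0)]; ring
      rw [habs, abs_le]
      exact ⟨by linarith [hξ1.1, hξ1.2], by linarith [hξ1.1, hξ1.2]⟩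
    · exact ⟨u t, by simp [h], by simp [h]⟩
    · obtain ⟨ξ, hξ1, hξ2⟩ := exists_hasDerivAt_eq_slope S.φ (deriv S.φ) h
        S.phi_diff.continuous.continuousOn (fun y _ => S.phi_hasDeriv y)
      have hne : u s - u t ≠ 0 := by linarith
      rw [eq_div_iff hne] at hξ2
      refine ⟨ξ, by linear_combination -hξ2, ?_⟩
      have habs : |u s - u t| = u s - u t := by rw [abs_of_pos (by linarith : (0:ℝ) < u s - u t)]
      rw [habs, abs_le]
      exact ⟨by linarith [hξ1.1, hξ1.2], by linarith [hξ1.1, hξ1.2]⟩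
  choose ξ hξeq hξle using hex
  have iden : ∀ s, 0 ≤ s → s < S.T →
      (u s - u t) * (1 + s * deriv S.φ (ξ s)) = (t - s) * S.p0 (u t) := by
    intro s h0 hT
    have hk := key s h0 hT
    rw [p0] at hk ⊢
    linear_combination hk - s * (hξeq s)
  have denom_lb : ∀ s, 0 ≤ s → s ≤ τ → ∀ z, κ ≤ 1 + s * deriv S.φ z := by
    intro s h0 hsτ z
    have h1 := S.m_le z
    have hm := S.m_neg
    nlinarith
  have lip : ∀ s, 0 ≤ s → s < S.T → s ≤ τ → |u s - u t| * κ ≤ |t - s| * 2 := by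
    intro s h0 hT hsτ
    have hid := iden s h0 hT
    have hd := denom_lb s h0 hsτ (ξ s)
    have hp1 := S.p0_ge (u t); have hp2 := S.p0_le (u t)
    calc |u s - u t| * κ ≤ |u s - u t| * (1 + s * deriv S.φ (ξ s)) := by
           apply mul_le_mul_of_nonneg_left hd (abs_nonneg _)
      _ = |u s - u t| * |1 + s * deriv S.φ (ξ s)| := by
           rw [abs_of_pos (lt_of_lt_of_le hκ hd)]
      _ = |(u s - u t) * (1 + s * deriv S.φ (ξ s))| := (abs_mul _ _).symm
      _ = |(t - s) * S.p0 (u t)| := by rw [hid]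
      _ = |t - s| * S.p0 (u t) := by
           rw [abs_mul, abs_of_pos (lt_of_lt_of_le one_pos hp1)]
      _ ≤ |t - s| * 2 := mul_le_mul_of_nonneg_left hp2 (abs_nonneg _)
  set l := 𝓝[S.J \ {t}] t with hl
  have hl_le : l ≤ 𝓝 t := nhdsWithin_le_nhds
  have hmemτ : ∀ᶠ s in l, s ∈ S.J ∧ s < τ := by
    have h1 : ∀ᶠ s in l, s ∈ S.J \ {t} := self_mem_nhdsWithin
    have h2 : ∀ᶠ s in l, s < τ := hl_le (Iio_mem_nhds hτ)
    filter_upwards [h1, h2] with s hs1 hs2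
    exact ⟨hs1.1, hs2⟩
  have hid_t : Tendsto (fun s : ℝ => s) l (𝓝 t) := Filter.Tendsto.mono_left tendsto_id hl_le
  have habs0 : Tendsto (fun s => |t - s| * (2/κ)) l (𝓝 0) := by
    have hc : Continuous (fun s : ℝ => |t - s| * (2/κ)) := by continuity
    have := (hc.tendsto t).mono_left hl_le
    simpa using this
  have hxi : Tendsto ξ l (𝓝 (u t)) := by
    rw [tendsto_iff_dist_tendsto_zero]
    have hbound : ∀ᶠ s in l, dist (ξ s) (u t) ≤ |t - s| * (2/κ) := by
      filter_upwards [hmemτ] with s hs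
      obtain ⟨⟨h0, hT⟩, hsτ⟩ := hs
      have h1 := hξle s
      have h2 := lip s h0 hT hsτ.le
      have h3 : |ξ s - u t| * κ ≤ |t - s| * 2 :=
        le_trans (mul_le_mul_of_nonneg_right h1 hκ.le) h2
      rw [Real.dist_eq]
      calc |ξ s - u t| = |ξ s - u t| * κ / κ := by field_simp
        _ ≤ |t - s| * 2 / κ := by gcongr
        _ = |t - s| * (2/κ) := by ring
    exact squeeze_zero' (Filter.Eventually.of_forall fun s => dist_nonneg) hbound habs0
  have hdenom : Tendsto (fun s => 1 + s * deriv S.φ (ξ s)) l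
      (𝓝 (1 + t * deriv S.φ (u t))) := by
    apply Tendsto.const_add
    exact hid_t.mul ((S.deriv_phi_cont.tendsto (u t)).comp hxi)
  have hpos := S.one_add_pos ht0 htT (u t)
  have hfinal : Tendsto (fun s => -(S.p0 (u t)) / (1 + s * deriv S.φ (ξ s))) l
      (𝓝 (-(S.p0 (u t)) / (1 + t * deriv S.φ (u t)))) :=
    tendsto_const_nhds.div hdenom hpos.ne'
  have heq : ∀ᶠ s in l, -(S.p0 (u t)) / (1 + s * deriv S.φ (ξ s)) = slope u t s := by
    filter_upwards [hmemτ, self_mem_nhdsWithin] with s hs hsJ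
    obtain ⟨⟨h0, hT⟩, hsτ⟩ := hs
    have hst : s ≠ t := fun h => hsJ.2 (by simp [h])
    have hid := iden s h0 hT
    have hd : (0:ℝ) < 1 + s * deriv S.φ (ξ s) := lt_of_lt_of_le hκ (denom_lb s h0 hsτ.le (ξ s))
    rw [slope_def_field]
    rw [div_eq_div_iff hd.ne' (sub_ne_zero.2 hst)]
    linear_combination -hid
  rw [hasDerivWithinAt_iff_tendsto_slope]
  have : -(S.p0 (S.Y x t)) * (1 + t * deriv S.φ (S.Y x t))⁻¹
      = -(S.p0 (u t)) / (1 + t * deriv S.φ (u t)) := by rw [div_eq_mul_inv]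
  rw [this]
  exact hfinal.congr' heq

/-! ## the potential -/

def p0_smooth : ContDiff ℝ (⊤:ℕ∞) S.p0 := contDiff_const.add S.smooth

def w0 (y : ℝ) : ℝ := wf (S.p0 y)
def W0 (y : ℝ) : ℝ := ∫ s in S.a..y, S.w0 s

lemma w0_smooth : ContDiff ℝ (⊤:ℕ∞) S.w0 := by
  rw [contDiff_iff_contDiffAt]
  intro y
  exact (contDiffAt_wf (S.p0_ge y)).comp y S.p0_smooth.contDiffAt

lemma w0_cont : Continuous S.w0 := S.w0_smooth.continuous

lemma w0_zero {y : ℝ} (hy : y ∉ Set.Ioo S.a S.b) : S.w0 y = 0 := by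
  rw [w0, p0, S.vanish y hy]
  norm_num [wf]

lemma abs_w0_le (y : ℝ) : |S.w0 y| ≤ 2 := abs_wf_le (S.p0_ge y) (S.p0_le y)

lemma W0_hasDerivAt (y : ℝ) : HasDerivAt S.W0 (S.w0 y) y := by
  apply intervalIntegral.integral_hasDerivAt_right
    (S.w0_cont.intervalIntegrable _ _)
    (S.w0_cont.stronglyMeasurableAtFilter MeasureTheory.volume (𝓝 y))
    S.w0_cont.continuousAt

lemma W0_smooth : ContDiff ℝ (⊤:ℕ∞) S.W0 := by
  have hd : deriv S.W0 = S.w0 := funext fun y => (S.W0_hasDerivAt y).deriv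
  exact contDiff_infty_iff_deriv.2
    ⟨fun y => (S.W0_hasDerivAt y).differentiableAt, by rw [hd]; exact S.w0_smooth⟩

lemma W0_zero {y : ℝ} (hy : y ≤ S.a) : S.W0 y = 0 := by
  rw [W0]
  rw [intervalIntegral.integral_congr (g := fun _ => (0:ℝ))]
  · simp
  · intro z hz
    rw [Set.uIcc_of_ge hy] at hz
    exact S.w0_zero (fun hz' => absurd hz.2 (not_le.2 hz'.1))

lemma W0_const {y : ℝ} (hy : S.b ≤ y) : S.W0 y = S.W0 S.b := by
  have hadd := intervalIntegral.integral_add_adjacent_intervals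
    (a := S.a) (b := S.b) (c := y) (μ := MeasureTheory.volume)
    (S.w0_cont.intervalIntegrable _ _) (S.w0_cont.intervalIntegrable _ _)
  have hzero : (∫ s in S.b..y, S.w0 s) = 0 := by
    rw [intervalIntegral.integral_congr (g := fun _ => (0:ℝ))]
    · simp
    · intro z hz
      rw [Set.uIcc_of_le hy] at hz
      exact S.w0_zero (fun hz' => absurd hz.1 (not_le.2 hz'.2))
  rw [W0, W0, ← hadd, hzero, add_zero]

lemma abs_W0_le (y : ℝ) : |S.W0 y| ≤ 2 * (S.b - S.a) := by
  have hab := S.hab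
  rcases le_or_gt y S.a with h | h
  · rw [S.W0_zero h]; simp; linarith
  rcases le_or_gt y S.b with h2 | h2
  · have := intervalIntegral.norm_integral_le_of_norm_le_const (C := 2) (f := S.w0)
      (a := S.a) (b := y) (fun z _ => by simpa using S.abs_w0_le z)
    rw [W0]
    calc |∫ s in S.a..y, S.w0 s| ≤ 2 * |y - S.a| := this
      _ ≤ 2 * (S.b - S.a) := by rw [abs_of_pos (by linarith)]; linarith
  · rw [S.W0_const h2.le]
    have := intervalIntegral.norm_integral_le_of_norm_le_const (C := 2) (f := S.w0)
      (a := S.a) (b := S.b) (fun z _ => by simpa using S.abs_w0_le z)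
    rw [W0]
    calc |∫ s in S.a..S.b, S.w0 s| ≤ 2 * |S.b - S.a| := this
      _ = 2 * (S.b - S.a) := by rw [abs_of_pos (by linarith)]

/-! ## solution building blocks -/

def P (x t : ℝ) : ℝ := S.p0 (S.Y x t)
def Ed (x t : ℝ) : ℝ := deriv S.φ (S.Y x t)
def Dd (x t : ℝ) : ℝ := (1 + t * S.Ed x t)⁻¹
def Lam (x t : ℝ) : ℝ := S.W0 (S.Y x t) + t * Hf (S.P x t)

lemma P_ge (x t : ℝ) : 1 ≤ S.P x t := S.p0_ge _
lemma P_le (x t : ℝ) : S.P x t ≤ 2 := S.p0_le _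

lemma Dd_pos {t : ℝ} (ht0 : 0 ≤ t) (htT : t < S.T) (x : ℝ) : 0 < S.Dd x t :=
  inv_pos.2 (S.one_add_pos ht0 htT _)

lemma Dd_mul {t : ℝ} (ht0 : 0 ≤ t) (htT : t < S.T) (x : ℝ) :
    S.Dd x t * (1 + t * S.Ed x t) = 1 :=
  inv_mul_cancel₀ (S.one_add_pos ht0 htT _).ne'

lemma hasDerivAt_p0 (y : ℝ) : HasDerivAt S.p0 (deriv S.φ y) y := by
  have := (S.phi_hasDeriv y).const_add 1
  exact this

lemma comp_space {G gp : ℝ → ℝ} {t : ℝ} (ht0 : 0 ≤ t) (htT : t < S.T) (x : ℝ)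
    (hG : ∀ p, 1 ≤ p → HasDerivAt G (gp p) p) :
    HasDerivAt (fun x' => G (S.P x' t)) (gp (S.P x t) * (S.Ed x t * S.Dd x t)) x := by
  have h1 := S.Y_hasDerivAt ht0 htT x
  have h2 := S.hasDerivAt_p0 (S.Y x t)
  have h3 := HasDerivAt.comp (x := x) (hG _ (S.P_ge x t)) (h2.comp x h1)
  have hfun : (fun x' => G (S.P x' t)) = G ∘ (S.p0 ∘ fun x' => S.Y x' t) := rfl
  rw [hfun]
  exact h3

lemma comp_time {G gp : ℝ → ℝ} {t : ℝ} (ht0 : 0 ≤ t) (htT : t < S.T) (x : ℝ)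
    (hG : ∀ p, 1 ≤ p → HasDerivAt G (gp p) p) :
    HasDerivWithinAt (fun s => G (S.P x s))
      (gp (S.P x t) * (S.Ed x t * (-(S.P x t) * S.Dd x t))) S.J t := by
  have h1 := S.Y_time ht0 htT x
  have h2 := S.hasDerivAt_p0 (S.Y x t)
  have h3 := HasDerivAt.comp_hasDerivWithinAt (x := t)
    (hG _ (S.P_ge x t)) (h2.comp_hasDerivWithinAt t h1)
  have hfun : (fun s => G (S.P x s)) = G ∘ (S.p0 ∘ fun s => S.Y x s) := rfl
  rw [hfun]
  exact h3

lemma Lam_space {t : ℝ} (ht0 : 0 ≤ t) (htT : t < S.T) (x : ℝ) :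
    HasDerivAt (fun x' => S.Lam x' t) (wf (S.P x t)) x := by
  have h1 := HasDerivAt.comp (x := x) (S.W0_hasDerivAt (S.Y x t)) (S.Y_hasDerivAt ht0 htT x)
  have h2 := (S.comp_space ht0 htT x (fun p hp => hasDerivAt_Hf hp)).const_mul t
  have h3 := h1.add h2
  have hfun : (fun x' => S.Lam x' t)
      = (S.W0 ∘ fun x' => S.Y x' t) + fun x' => t * Hf (S.P x' t) := by
    funext x'; simp [Lam, Function.comp]
  rw [hfun]
  refine h3.congr_deriv ?_; symm
  have hd : S.Dd x t * (1 + t * S.Ed x t) = 1 := S.Dd_mul ht0 htT x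
  simp only [w0, Ed, Dd, P, id_eq] at *
  linear_combination (-(wf (S.p0 (S.Y x t)))) * hd

lemma Lam_time {t : ℝ} (ht0 : 0 ≤ t) (htT : t < S.T) (x : ℝ) :
    HasDerivWithinAt (fun s => S.Lam x s) (-(qf (S.P x t))) S.J t := by
  have h1 := HasDerivAt.comp_hasDerivWithinAt (x := t)
    (S.W0_hasDerivAt (S.Y x t)) (S.Y_time ht0 htT x)
  have h2 := (hasDerivWithinAt_id t S.J).mul
    (S.comp_time ht0 htT x (fun p hp => hasDerivAt_Hf hp))
  have h3 := h1.add h2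
  have hfun : (fun s => S.Lam x s)
      = (S.W0 ∘ fun s => S.Y x s) + fun s => s * Hf (S.P x s) := by
    funext s; simp [Lam, Function.comp]
  rw [hfun]
  refine h3.congr_deriv ?_; symm
  have hd : S.Dd x t * (1 + t * S.Ed x t) = 1 := S.Dd_mul ht0 htT x
  have hid2 := identity2 (S.P_ge x t)
  simp only [w0, Ed, Dd, P, id_eq] at *
  linear_combination (S.p0 (S.Y x t) * wf (S.p0 (S.Y x t))) * hd - hid2

/-! ## continuity in space -/

section Continuity

variable {t : ℝ}

lemma P_cont (ht0 : 0 ≤ t) (htT : t < S.T) : Continuous (fun x => S.P x t) :=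
  S.p0_smooth.continuous.comp (S.Y_cont ht0 htT)

lemma sqrtP_cont (ht0 : 0 ≤ t) (htT : t < S.T) : Continuous (fun x => Real.sqrt (S.P x t)) :=
  Real.continuous_sqrt.comp (S.P_cont ht0 htT)

lemma sqrtP_ne (ht0 : 0 ≤ t) (htT : t < S.T) (x : ℝ) : Real.sqrt (S.P x t) ≠ 0 := (sqrt_pos' (S.P_ge x t)).ne'

lemma Ed_cont (ht0 : 0 ≤ t) (htT : t < S.T) : Continuous (fun x => S.Ed x t) :=
  S.deriv_phi_cont.comp (S.Y_cont ht0 htT)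

lemma Dd_cont (ht0 : 0 ≤ t) (htT : t < S.T) : Continuous (fun x => S.Dd x t) :=
  (continuous_const.add (continuous_const.mul (S.Ed_cont ht0 htT))).inv₀
    (fun x => (S.one_add_pos ht0 htT _).ne')

lemma wfP_cont (ht0 : 0 ≤ t) (htT : t < S.T) : Continuous (fun x => wf (S.P x t)) := by
  unfold wf
  exact continuous_const.mul ((S.P_cont ht0 htT).sub
    ((S.sqrtP_cont ht0 htT).inv₀ (S.sqrtP_ne ht0 htT)))

lemma qfP_cont (ht0 : 0 ≤ t) (htT : t < S.T) : Continuous (fun x => qf (S.P x t)) := by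
  unfold qf
  exact (((S.P_cont ht0 htT).pow 2).div_const 3).add
    (continuous_const.mul (S.sqrtP_cont ht0 htT))

lemma qdP_cont (ht0 : 0 ≤ t) (htT : t < S.T) : Continuous (fun x => qd (S.P x t)) := by
  unfold qd
  exact ((continuous_const.mul (S.P_cont ht0 htT)).div_const 3).add
    (continuous_const.div (continuous_const.mul (S.sqrtP_cont ht0 htT))
      (fun x => by simpa using (S.sqrtP_ne ht0 htT x)))

lemma wdP_cont (ht0 : 0 ≤ t) (htT : t < S.T) : Continuous (fun x => wd (S.P x t)) := by
  unfold wd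
  exact continuous_const.add
    (continuous_const.div (continuous_const.mul ((S.sqrtP_cont ht0 htT).pow 3))
      (fun x => by simpa using pow_ne_zero 3 (S.sqrtP_ne ht0 htT x)))

lemma Lam_cont (ht0 : 0 ≤ t) (htT : t < S.T) : Continuous (fun x => S.Lam x t) := by
  unfold Lam
  exact (S.W0_smooth.continuous.comp (S.Y_cont ht0 htT)).add
    (continuous_const.mul (by
      unfold Hf
      exact (((S.P_cont ht0 htT).pow 2).div_const 3).sub
        (continuous_const.mul (S.sqrtP_cont ht0 htT))))

end Continuity

/-! ## the solution -/

section Solution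

variable {χ μ : ℝ} {t : ℝ}

lemma rho_x (ht0 : 0 ≤ t) (htT : t < S.T) (x : ℝ) :
    HasDerivAt (fun y => qf (S.P y t) / (χ*μ))
      (qd (S.P x t) * (S.Ed x t * S.Dd x t) / (χ*μ)) x :=
  (S.comp_space ht0 htT x (fun p hp => hasDerivAt_qf hp)).div_const _

lemma c_x (ht0 : 0 ≤ t) (htT : t < S.T) (x : ℝ) :
    HasDerivAt (fun y => Real.exp (S.Lam y t / χ))
      (Real.exp (S.Lam x t / χ) * (wf (S.P x t) / χ)) x :=
  ((S.Lam_space ht0 htT x).div_const χ).exp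

lemma c_xx (ht0 : 0 ≤ t) (htT : t < S.T) (x : ℝ) :
    HasDerivAt (fun y => Real.exp (S.Lam y t / χ) * (wf (S.P y t) / χ))
      (Real.exp (S.Lam x t / χ) * (wf (S.P x t) / χ) * (wf (S.P x t) / χ)
        + Real.exp (S.Lam x t / χ) * (wd (S.P x t) * (S.Ed x t * S.Dd x t) / χ)) x := by
  have h := (S.c_x (χ := χ) ht0 htT x).mul
    ((S.comp_space ht0 htT x (fun p hp => hasDerivAt_wf hp)).div_const χ)
  exact h

lemma log_c_deriv (ht0 : 0 ≤ t) (htT : t < S.T) (x : ℝ) :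
    deriv (fun z => Real.log (Real.exp (S.Lam z t / χ))) x = wf (S.P x t) / χ := by
  have hfun : (fun z => Real.log (Real.exp (S.Lam z t / χ))) = fun z => S.Lam z t / χ :=
    funext fun z => Real.log_exp _
  rw [hfun]
  exact ((S.Lam_space ht0 htT x).div_const χ).deriv

lemma rho_space (ht0 : 0 ≤ t) (htT : t < S.T) (hχ : 0 < χ) (hμ : 0 < μ) : ContDiff ℝ 1 (fun x => qf (S.P x t) / (χ*μ)) := by
  rw [contDiff_one_iff_deriv]
  constructor
  · exact fun x => (S.rho_x ht0 htT x).differentiableAt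
  · have hd : deriv (fun y => qf (S.P y t) / (χ*μ))
        = fun x => qd (S.P x t) * (S.Ed x t * S.Dd x t) / (χ*μ) :=
      funext fun x => (S.rho_x ht0 htT x).deriv
    rw [hd]
    exact (((S.qdP_cont ht0 htT).mul ((S.Ed_cont ht0 htT).mul (S.Dd_cont ht0 htT)))).div_const _

lemma c_space (ht0 : 0 ≤ t) (htT : t < S.T) : ContDiff ℝ 2 (fun x => Real.exp (S.Lam x t / χ)) := by
  rw [show (2 : WithTop ℕ∞) = 1 + 1 from by norm_num, contDiff_succ_iff_deriv]
  refine ⟨fun x => (S.c_x ht0 htT x).differentiableAt, by simp, ?_⟩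
  have hd : deriv (fun y => Real.exp (S.Lam y t / χ))
      = fun x => Real.exp (S.Lam x t / χ) * (wf (S.P x t) / χ) :=
    funext fun x => (S.c_x ht0 htT x).deriv
  rw [hd, contDiff_one_iff_deriv]
  constructor
  · exact fun x => (S.c_xx ht0 htT x).differentiableAt
  · have hd2 : deriv (fun y => Real.exp (S.Lam y t / χ) * (wf (S.P y t) / χ))
        = fun x => Real.exp (S.Lam x t / χ) * (wf (S.P x t) / χ) * (wf (S.P x t) / χ)
            + Real.exp (S.Lam x t / χ) * (wd (S.P x t) * (S.Ed x t * S.Dd x t) / χ) :=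
      funext fun x => (S.c_xx ht0 htT x).deriv
    rw [hd2]
    have hexp : Continuous (fun x => Real.exp (S.Lam x t / χ)) :=
      Real.continuous_exp.comp ((S.Lam_cont ht0 htT).div_const χ)
    exact ((hexp.mul ((S.wfP_cont ht0 htT).div_const χ)).mul
        ((S.wfP_cont ht0 htT).div_const χ)).add
      (hexp.mul (((S.wdP_cont ht0 htT).mul
        ((S.Ed_cont ht0 htT).mul (S.Dd_cont ht0 htT))).div_const χ))

lemma rho_eq (ht0 : 0 ≤ t) (htT : t < S.T) (hχ : 0 < χ) (hμ : 0 < μ) (x : ℝ) :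
    HasDerivWithinAt (fun s => qf (S.P x s) / (χ*μ))
      (-χ * deriv (fun y => qf (S.P y t) / (χ*μ)
          * deriv (fun z => Real.log (Real.exp (S.Lam z t / χ))) y) x) S.J t := by
  have hfun : (fun y => qf (S.P y t) / (χ*μ)
      * deriv (fun z => Real.log (Real.exp (S.Lam z t / χ))) y)
      = fun y => qf (S.P y t) * wf (S.P y t) / (χ*(χ*μ)) := by
    funext y
    rw [S.log_c_deriv ht0 htT y, div_mul_div_comm]
    ring_nf
  rw [hfun]
  have hprod : HasDerivAt (fun y => qf (S.P y t) * wf (S.P y t) / (χ*(χ*μ)))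
      ((qd (S.P x t) * (S.Ed x t * S.Dd x t) * wf (S.P x t)
        + qf (S.P x t) * (wd (S.P x t) * (S.Ed x t * S.Dd x t))) / (χ*(χ*μ))) x :=
    ((S.comp_space ht0 htT x (fun p hp => hasDerivAt_qf hp)).mul
      (S.comp_space ht0 htT x (fun p hp => hasDerivAt_wf hp))).div_const _
  rw [hprod.deriv]
  have h := (S.comp_time ht0 htT x (fun p hp => hasDerivAt_qf hp)).div_const (χ*μ)
  refine h.congr_deriv ?_; symm
  have hid := identity1 (S.P_ge x t)
  have hstep : -(qd (S.P x t) * (S.Ed x t * S.Dd x t) * wf (S.P x t)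
      + qf (S.P x t) * (wd (S.P x t) * (S.Ed x t * S.Dd x t)))
      = qd (S.P x t) * (S.Ed x t * (-(S.P x t) * S.Dd x t)) := by
    linear_combination (S.Ed x t * S.Dd x t) * hid
  rw [show -χ * ((qd (S.P x t) * (S.Ed x t * S.Dd x t) * wf (S.P x t)
      + qf (S.P x t) * (wd (S.P x t) * (S.Ed x t * S.Dd x t))) / (χ*(χ*μ)))
      = -(qd (S.P x t) * (S.Ed x t * S.Dd x t) * wf (S.P x t)
      + qf (S.P x t) * (wd (S.P x t) * (S.Ed x t * S.Dd x t))) / (χ*μ) from by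
    field_simp]
  rw [hstep]

lemma c_eq (ht0 : 0 ≤ t) (htT : t < S.T) (hχ : 0 < χ) (hμ : 0 < μ) (x : ℝ) :
    HasDerivWithinAt (fun s => Real.exp (S.Lam x s / χ))
      (-μ * Real.exp (S.Lam x t / χ) * (qf (S.P x t) / (χ*μ))) S.J t := by
  have h := ((S.Lam_time ht0 htT x).div_const χ).exp
  convert h using 1
  field_simp

end Solution

/-! ## bounds and blow-up -/

lemma abs_Lam_le {t : ℝ} (ht0 : 0 ≤ t) (htT : t < S.T) (x : ℝ) :
    |S.Lam x t| ≤ 6 * (S.b - S.a) := by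
  have h1 := S.abs_W0_le (S.Y x t)
  have h2 := abs_Hf_le (S.P_ge x t) (S.P_le x t)
  have h3 : t ≤ S.b - S.a := le_trans htT.le S.T_le
  calc |S.Lam x t| ≤ |S.W0 (S.Y x t)| + |t * Hf (S.P x t)| := abs_add_le _ _
    _ ≤ 2*(S.b - S.a) + t * 4 := by
        rw [abs_mul, abs_of_nonneg ht0]
        have : t * |Hf (S.P x t)| ≤ t * 4 := mul_le_mul_of_nonneg_left h2 ht0
        linarith
    _ ≤ 6 * (S.b - S.a) := by linarith

lemma m_T : (-S.m) * S.T = 1 := by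
  have := S.m_neg
  rw [T]
  exact mul_inv_cancel₀ (by linarith : -S.m ≠ 0)

lemma blowup_bound {χ μ : ℝ} (hχ : 0 < χ) (hμ : 0 < μ) {t : ℝ} (ht0 : 0 ≤ t) (htT : t < S.T) :
    2/(3*((S.T - t)*(χ*μ))) ≤ |deriv (fun y => qf (S.P y t)/(χ*μ)) (S.g t S.ystar)| := by
  have hY : S.Y (S.g t S.ystar) t = S.ystar := S.Y_g ht0 htT _
  have hd := (S.rho_x (χ:=χ) (μ:=μ) ht0 htT (S.g t S.ystar)).deriv
  rw [hd]
  have hE : S.Ed (S.g t S.ystar) t = S.m := by rw [Ed, hY]; rfl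
  have hP : S.P (S.g t S.ystar) t = S.p0 S.ystar := by rw [P, hY]
  have hD : S.Dd (S.g t S.ystar) t = (1 + t * S.m)⁻¹ := by rw [Dd, hE]
  rw [hE, hP, hD]
  have hm := S.m_neg
  have hTt : 0 < S.T - t := by linarith
  have hmT := S.m_T
  have h1tm : 0 < 1 + t * S.m := by
    have := S.one_add_pos ht0 htT S.ystar
    exact this
  have hA : 2/3 ≤ qd (S.p0 S.ystar) := qd_ge (S.p0_ge _)
  have heq : 1 + t * S.m = (-S.m) * (S.T - t) := by linear_combination -hmT
  have hval : qd (S.p0 S.ystar) * (S.m * (1 + t * S.m)⁻¹) / (χ*μ)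
      = -(qd (S.p0 S.ystar) / ((S.T - t)*(χ*μ))) := by
    rw [heq]
    field_simp [hm.ne, hTt.ne', hχ.ne', hμ.ne']
  rw [hval, abs_neg, abs_of_pos (by positivity)]
  rw [div_le_div_iff₀ (by positivity) (by positivity)]
  have hX : 0 < (S.T - t)*(χ*μ) := by positivity
  nlinarith [mul_nonneg (by linarith : (0:ℝ) ≤ qd (S.p0 S.ystar) - 2/3) hX.le]

/-! ## initial data -/

lemma P_zero (x : ℝ) : S.P x 0 = S.p0 x := by rw [P, S.Y_zero]
lemma Lam_zero (x : ℝ) : S.Lam x 0 = S.W0 x := by rw [Lam, S.Y_zero]; ring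

lemma rho0_smooth (χ μ : ℝ) : ContDiff ℝ (⊤:ℕ∞) (fun x => qf (S.p0 x) / (χ*μ)) := by
  apply ContDiff.div_const
  rw [contDiff_iff_contDiffAt]
  exact fun x => (contDiffAt_qf (S.p0_ge x)).comp x S.p0_smooth.contDiffAt

lemma c0_smooth (χ : ℝ) : ContDiff ℝ (⊤:ℕ∞) (fun x => Real.exp (S.W0 x / χ)) :=
  Real.contDiff_exp.comp (S.W0_smooth.div_const χ)

lemma rho0_const {y : ℝ} (hy : y ∉ Set.Ioo S.a S.b) (χ μ : ℝ) :
    qf (S.p0 y) / (χ*μ) = qf 1 / (χ*μ) := by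
  rw [p0, S.vanish y hy, add_zero]

lemma c0_const_left {y : ℝ} (hy : y ≤ S.a) (χ : ℝ) :
    Real.exp (S.W0 y / χ) = 1 := by
  rw [S.W0_zero hy]; simp

lemma c0_const_right {y : ℝ} (hy : S.b ≤ y) (χ : ℝ) :
    Real.exp (S.W0 y / χ) = Real.exp (S.W0 S.b / χ) := by
  rw [S.W0_const hy]

end Setup

/-! ## integrability of derivatives of functions constant outside a compact interval -/

lemma iteratedDeriv_succ_zero_of_eventually_const {k : ℕ} :
    ∀ {f : ℝ → ℝ} {y C : ℝ}, (f =ᶠ[𝓝 y] fun _ => C) → iteratedDeriv (k+1) f y = 0 := by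
  induction k with
  | zero =>
    intro f y C h
    rw [iteratedDeriv_one, h.deriv_eq]
    exact deriv_const y C
  | succ n ih =>
    intro f y C h
    rw [iteratedDeriv_succ']
    refine ih (C := 0) ?_
    have h2 := h.deriv
    refine h2.trans (Filter.Eventually.of_forall fun z => ?_)
    exact deriv_const z C

lemma integrable_sq_iteratedDeriv {f : ℝ → ℝ} (hf : ContDiff ℝ (⊤:ℕ∞) f) {a b cl cr : ℝ}
    (hl : ∀ y, y < a → f y = cl) (hr : ∀ y, b < y → f y = cr) {k : ℕ} (hk : 1 ≤ k) :
    MeasureTheory.Integrable (fun x => (iteratedDeriv k f x)^2) := by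
  have hcont : Continuous (iteratedDeriv k f) := hf.continuous_iteratedDeriv k (by exact_mod_cast le_top)
  have hzero : ∀ y, y ∉ Set.Icc a b → iteratedDeriv k f y = 0 := by
    intro y hy
    obtain ⟨k', rfl⟩ : ∃ k', k = k'+1 := ⟨k-1, (Nat.succ_pred_eq_of_pos hk).symm⟩
    rw [Set.mem_Icc, not_and_or] at hy
    rcases hy with hy | hy
    · push_neg at hy
      refine iteratedDeriv_succ_zero_of_eventually_const (C := cl) ?_
      filter_upwards [Iio_mem_nhds hy] with z hz
      exact hl z hz
    · push_neg at hy
      refine iteratedDeriv_succ_zero_of_eventually_const (C := cr) ?_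
      filter_upwards [Ioi_mem_nhds hy] with z hz
      exact hr z hz
  have hcs : HasCompactSupport (fun x => (iteratedDeriv k f x)^2) :=
    HasCompactSupport.intro isCompact_Icc (fun y hy => by rw [hzero y hy]; norm_num)
  exact (hcont.pow 2).integrable_of_hasCompactSupport hcs



/-! ## construction of a Setup on a prescribed interval -/

lemma exists_setup (x₀ L : ℝ) (hL : 0 < L) : ∃ S : Setup, S.a = x₀ ∧ S.b = x₀ + L := by
  classical
  set f : ContDiffBump (x₀ + L/2) := ⟨L/4, L/2, by positivity, by linarith⟩ with hf
  have hvan : ∀ y, y ∉ Set.Ioo x₀ (x₀+L) → f y = 0 := by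
    intro y hy
    apply f.zero_of_le_dist
    rw [Set.mem_Ioo, not_and_or] at hy
    have : f.rOut = L/2 := rfl
    rw [this, Real.dist_eq]
    rcases hy with hy|hy
    · push_neg at hy
      rw [abs_of_nonpos (by linarith)]
      linarith
    · push_neg at hy
      rw [abs_of_nonneg (by linarith)]
      linarith
  have hdc : Continuous (deriv (f : ℝ → ℝ)) :=
    (f.contDiff (n := (⊤:ℕ∞))).continuous_deriv (by norm_num)
  obtain ⟨y₀, hy₀⟩ := hdc.exists_forall_le_of_hasCompactSupport f.hasCompactSupport.deriv
  have hc1 : (f : ℝ → ℝ) (x₀ + L/2) = 1 := f.one_of_mem_closedBall (by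
    simp only [Metric.mem_closedBall, dist_self]
    positivity)
  have hc0 : (f : ℝ → ℝ) (x₀ + L) = 0 := hvan _ (by
    rw [Set.mem_Ioo]; push_neg; intro _; linarith)
  obtain ⟨ξ, hξIoo, hξ⟩ := exists_hasDerivAt_eq_slope (f : ℝ → ℝ) (deriv (f : ℝ → ℝ))
    (by linarith : x₀ + L/2 < x₀ + L)
    ((f.contDiff (n := (⊤:ℕ∞))).continuous.continuousOn)
    (fun y _ => (((f.contDiff (n := (⊤:ℕ∞))).differentiable (by norm_num)) y).hasDerivAt)
  have hslope : deriv (f : ℝ → ℝ) ξ = -(2/L) := by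
    rw [hξ, hc0, hc1]
    rw [show x₀ + L - (x₀ + L/2) = L/2 by ring]
    field_simp
    norm_num
  have hmy : deriv (f : ℝ → ℝ) y₀ ≤ -(2/L) := le_trans (hy₀ ξ) (le_of_eq hslope)
  have h2L : (0:ℝ) < 2/L := by positivity
  have hmneg : deriv (f : ℝ → ℝ) y₀ < 0 := by linarith
  have hyin : y₀ ∈ Set.Icc x₀ (x₀+L) := by
    by_contra hy
    have hev : (f : ℝ → ℝ) =ᶠ[𝓝 y₀] fun _ => (0:ℝ) := by
      filter_upwards [isClosed_Icc.isOpen_compl.mem_nhds hy] with z hz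
      exact hvan z (fun hzin => hz (Set.Ioo_subset_Icc_self hzin))
    have hd0 : deriv (f : ℝ → ℝ) y₀ = 0 := by
      rw [hev.deriv_eq]; exact deriv_const _ _
    linarith
  refine ⟨⟨(f : ℝ → ℝ), x₀, x₀+L, by linarith, f.contDiff, fun y => f.nonneg,
    fun y => f.le_one, hvan, y₀, hy₀, hmneg, hyin, ?_⟩, rfl, rfl⟩
  have h1 : 2/L ≤ -(deriv (f : ℝ → ℝ) y₀) := by linarith
  have h2 : L * (2/L) = 2 := by field_simp
  calc (1:ℝ) ≤ L * (2/L) := by rw [h2]; norm_num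
    _ ≤ (x₀ + L - x₀) * (-(deriv (f : ℝ → ℝ) y₀)) := by
        rw [show x₀ + L - x₀ = L by ring]
        exact mul_le_mul_of_nonneg_left h1 hL.le

end

end KSB


open KSB

/-- **Theorem 1.3, case `d = 1`** (Finite-time blow-up within any prescribed interval of `ℝ`). -/
theorem finite_time_blowup_in_prescribed_interval
    (χ μ : ℝ) (hχ : 0 < χ) (hμ : 0 < μ)
    (I : Set ℝ) (hIopen : IsOpen I) (hIne : I.Nonempty) (hIinterval : I.OrdConnected) :
    ∃ Tstar : ℝ, 0 < Tstar ∧ ∃ ρ₀ c₀ : ℝ → ℝ,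
      -- smooth bounded initial data with positive constant lower bounds and
      -- square-integrable derivatives of all orders `k ≥ 1`
      ContDiff ℝ (⊤ : ℕ∞) ρ₀ ∧ ContDiff ℝ (⊤ : ℕ∞) c₀ ∧
      (∃ M : ℝ, ∀ x, |ρ₀ x| ≤ M ∧ |c₀ x| ≤ M) ∧
      (∃ β₁ β₂ : ℝ, 0 < β₁ ∧ 0 < β₂ ∧ ∀ x, β₁ ≤ ρ₀ x ∧ β₂ ≤ c₀ x) ∧
      (∀ k : ℕ, 1 ≤ k → Integrable (fun x => (iteratedDeriv k ρ₀ x) ^ 2) ∧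
        Integrable (fun x => (iteratedDeriv k c₀ x) ^ 2)) ∧
      ∃ ρ c : ℝ → ℝ → ℝ,
        IsClassicalSolution1D χ μ ρ c (Set.Ico 0 Tstar) ∧
        (∀ x, ρ x 0 = ρ₀ x ∧ c x 0 = c₀ x) ∧
        -- `ρ`, `c`, `∂ₓc` and `∂ₓ log c` stay uniformly bounded up to time `T*`
        (∃ M : ℝ, ∀ x : ℝ, ∀ t ∈ Set.Ico (0:ℝ) Tstar,
          |ρ x t| + |c x t| + |deriv (fun y => c y t) x| +
            |deriv (fun y => Real.log (c y t)) x| ≤ M) ∧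
        -- `‖∂ₓρ(·,t)‖_{L^∞(I)} + ‖∂ₓₓc(·,t)‖_{L^∞(I)} → ∞` as `t → T*`
        (∀ M : ℝ, ∀ᶠ t in 𝓝[<] Tstar, ∃ x ∈ I,
          M < |deriv (fun y => ρ y t) x| + |deriv (deriv (fun y => c y t)) x|) := by
  classical
  obtain ⟨x₀, hx₀⟩ := hIne
  obtain ⟨r, hr, hball⟩ := Metric.isOpen_iff.1 hIopen x₀ hx₀
  have hIoo : Set.Ioo (x₀ - r) (x₀ + r) ⊆ I := by rw [← Real.ball_eq_Ioo]; exact hball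
  obtain ⟨S, ha, hb⟩ := KSB.exists_setup x₀ (r/4) (by positivity)
  have hba : S.b - S.a = r/4 := by rw [ha, hb]; ring
  have hab : S.a < S.b := S.hab
  refine ⟨S.T, S.T_pos, fun x => qf (S.p0 x) / (χ*μ), fun x => Real.exp (S.W0 x / χ),
    S.rho0_smooth χ μ, S.c0_smooth χ, ?_, ?_, ?_, ?_⟩
  · -- bounded initial data
    refine ⟨8/(3*(χ*μ)) + Real.exp (2*(S.b - S.a)/χ), fun x => ⟨?_, ?_⟩⟩
    · have h1 := qf_ge_one (S.p0_ge x)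
      have h2 := qf_le (S.p0_ge x) (S.p0_le x)
      have hpos : 0 < χ*μ := by positivity
      have : |qf (S.p0 x) / (χ*μ)| = qf (S.p0 x) / (χ*μ) := abs_of_pos (by positivity)
      rw [this]
      have hE : (0:ℝ) ≤ Real.exp (2*(S.b - S.a)/χ) := (Real.exp_pos _).le
      have : qf (S.p0 x) / (χ*μ) ≤ (8/3) / (χ*μ) := by gcongr
      calc qf (S.p0 x) / (χ*μ) ≤ (8/3)/(χ*μ) := this
        _ = 8/(3*(χ*μ)) := by ring
        _ ≤ _ := by linarith
    · have h1 := S.abs_W0_le x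
      have h2 : |Real.exp (S.W0 x / χ)| = Real.exp (S.W0 x / χ) := abs_of_pos (Real.exp_pos _)
      rw [h2]
      have h3 : S.W0 x / χ ≤ 2*(S.b - S.a)/χ := by
        apply div_le_div_of_nonneg_right ?_ hχ.le
        exact le_trans (le_abs_self _) h1
      have h4 : (0:ℝ) < 8/(3*(χ*μ)) := by positivity
      calc Real.exp (S.W0 x / χ) ≤ Real.exp (2*(S.b - S.a)/χ) := Real.exp_le_exp.2 h3
        _ ≤ _ := by linarith
  · -- lower bounds
    refine ⟨1/(χ*μ), Real.exp (-(2*(S.b - S.a))/χ), by positivity, Real.exp_pos _,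
      fun x => ⟨?_, ?_⟩⟩
    · have h1 := qf_ge_one (S.p0_ge x)
      exact div_le_div_of_nonneg_right h1 (by positivity)
    · apply Real.exp_le_exp.2
      have h1 := S.abs_W0_le x
      have : -(2*(S.b - S.a)) ≤ S.W0 x := by
        have := neg_abs_le (S.W0 x)
        linarith
      exact div_le_div_of_nonneg_right this hχ.le
  · -- integrability
    intro k hk
    constructor
    · exact integrable_sq_iteratedDeriv (S.rho0_smooth χ μ) (a := S.a) (b := S.b)
        (cl := qf 1 / (χ*μ)) (cr := qf 1 / (χ*μ))
        (fun y hy => S.rho0_const (by rw [Set.mem_Ioo]; push_neg; intro h; linarith) χ μ)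
        (fun y hy => S.rho0_const (by rw [Set.mem_Ioo]; push_neg; intro h; linarith) χ μ) hk
    · exact integrable_sq_iteratedDeriv (S.c0_smooth χ) (a := S.a) (b := S.b)
        (cl := 1) (cr := Real.exp (S.W0 S.b / χ))
        (fun y hy => S.c0_const_left hy.le χ)
        (fun y hy => S.c0_const_right hy.le χ) hk
  · -- the solution
    refine ⟨fun x t => qf (S.P x t) / (χ*μ), fun x t => Real.exp (S.Lam x t / χ),
      ⟨?_, ?_, ?_, ?_, ?_⟩, ?_, ?_, ?_⟩
    · exact fun t ht => S.rho_space ht.1 ht.2 hχ hμ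
    · exact fun t ht => S.c_space (χ := χ) ht.1 ht.2
    · exact fun x t ht => Real.exp_pos _
    · exact fun x t ht => S.rho_eq ht.1 ht.2 hχ hμ x
    · exact fun x t ht => S.c_eq ht.1 ht.2 hχ hμ x
    · -- initial data
      intro x
      constructor
      · show qf (S.P x 0) / (χ*μ) = qf (S.p0 x) / (χ*μ)
        rw [S.P_zero]
      · show Real.exp (S.Lam x 0 / χ) = Real.exp (S.W0 x / χ)
        rw [S.Lam_zero]
    · -- uniform bounds
      refine ⟨8/(3*(χ*μ)) + Real.exp (6*(S.b - S.a)/χ)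
          + Real.exp (6*(S.b - S.a)/χ) * (2/χ) + 2/χ, fun x t ht => ?_⟩
      obtain ⟨ht0, htT⟩ := ht
      have hP1 := S.P_ge x t
      have hP2 := S.P_le x t
      have hL := S.abs_Lam_le ht0 htT x
      have hwf := abs_wf_le hP1 hP2
      have hLexp : Real.exp (S.Lam x t / χ) ≤ Real.exp (6*(S.b - S.a)/χ) := by
        apply Real.exp_le_exp.2
        apply div_le_div_of_nonneg_right ?_ hχ.le
        exact le_trans (le_abs_self _) hL
      have h1 : |qf (S.P x t) / (χ*μ)| ≤ 8/(3*(χ*μ)) := by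
        have hq1 := qf_ge_one hP1
        rw [abs_of_pos (by positivity : (0:ℝ) < qf (S.P x t) / (χ*μ))]
        have := qf_le hP1 hP2
        calc qf (S.P x t) / (χ*μ) ≤ (8/3)/(χ*μ) := by gcongr
          _ = 8/(3*(χ*μ)) := by ring
      have h2 : |Real.exp (S.Lam x t / χ)| ≤ Real.exp (6*(S.b - S.a)/χ) := by
        rw [abs_of_pos (Real.exp_pos _)]; exact hLexp
      have h3 : |deriv (fun y => Real.exp (S.Lam y t / χ)) x|
          ≤ Real.exp (6*(S.b - S.a)/χ) * (2/χ) := by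
        rw [(S.c_x ht0 htT x).deriv, abs_mul, abs_of_pos (Real.exp_pos _), abs_div,
          abs_of_pos hχ]
        apply mul_le_mul hLexp (by gcongr) (by positivity) (Real.exp_pos _).le
      have h4 : |deriv (fun y => Real.log (Real.exp (S.Lam y t / χ))) x| ≤ 2/χ := by
        rw [S.log_c_deriv ht0 htT x, abs_div, abs_of_pos hχ]
        gcongr
      linarith
    · -- blow-up
      intro M
      set δ : ℝ := min (S.T/2) (1/(3*χ*μ*(|M|+1))) with hδdef
      have hδpos : 0 < δ := by
        apply lt_min (by linarith [S.T_pos])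
        have : (0:ℝ) < |M| + 1 := by positivity
        positivity
      have hδT : S.T - δ < S.T := by linarith
      have hmem : Set.Ioo (S.T - δ) S.T ∈ 𝓝[<] S.T :=
        Ioo_mem_nhdsLT_of_mem ⟨hδT, le_rfl⟩
      filter_upwards [hmem] with t htmem
      obtain ⟨ht1, htT⟩ := htmem
      have ht0 : 0 ≤ t := by
        have hδ2 : δ ≤ S.T/2 := min_le_left _ _
        linarith
      refine ⟨S.g t S.ystar, ?_, ?_⟩
      · -- location in I
        apply hIoo
        have hys := S.hyin
        rw [Set.mem_Icc] at hys
        have hp1 := S.p0_ge S.ystar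
        have hp2 := S.p0_le S.ystar
        have hTle := S.T_le
        have hx1 : S.ystar ≤ S.g t S.ystar := by
          rw [Setup.g]
          nlinarith
        have hx2 : S.g t S.ystar ≤ S.ystar + 2*(S.b - S.a) := by
          rw [Setup.g]
          nlinarith
        rw [ha, hb] at hys
        rw [hba] at hx2
        rw [Set.mem_Ioo]
        constructor
        · linarith [hys.1]
        · linarith [hys.2]
      · -- the estimate
        have hbb := S.blowup_bound hχ hμ ht0 htT
        have hTt : 0 < S.T - t := by linarith
        have hTtδ : S.T - t < δ := by linarith
        have hδ3 : δ ≤ 1/(3*χ*μ*(|M|+1)) := min_le_right _ _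
        have hM1 : (0:ℝ) < |M| + 1 := by positivity
        have hkey : |M| + 1 < 2/(3*((S.T - t)*(χ*μ))) := by
          rw [lt_div_iff₀ (by positivity)]
          have h5 : S.T - t < 1/(3*χ*μ*(|M|+1)) := lt_of_lt_of_le hTtδ hδ3
          have h6 : (|M|+1) * (3*((S.T - t)*(χ*μ))) < (|M|+1) * (3*((1/(3*χ*μ*(|M|+1)))*(χ*μ))) := by
            apply mul_lt_mul_of_pos_left ?_ hM1
            apply mul_lt_mul_of_pos_left ?_ (by norm_num)
            exact mul_lt_mul_of_pos_right h5 (by positivity)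
          have h7 : (|M|+1) * (3*((1/(3*χ*μ*(|M|+1)))*(χ*μ))) = 1 := by
            field_simp [hχ.ne', hμ.ne', hM1.ne']
          linarith
        calc M ≤ |M| := le_abs_self M
          _ < 2/(3*((S.T - t)*(χ*μ))) := by linarith
          _ ≤ |deriv (fun y => qf (S.P y t)/(χ*μ)) (S.g t S.ystar)| := hbb
          _ ≤ _ := le_add_of_nonneg_right (abs_nonneg _)
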